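/- In a δ-hyperbolic geodesic metric space with basepoint o, if a sequence (x_n) satisfies d(x_n, x_{n+1}) = o(n) and |x_n|/n → l with l > 0 (where |x| = d(o,x)), then the Gromov products satisfy (x_{n-1}|x_n) = nl + o(n), and consequently (x_n|x_m) → ∞ as n,m → ∞, so (x_n) converges to a point of the Gromov boundary. -/
import Mathlib


open Filter

/-- In a δ-hyperbolic space, if `d(x_n, x_{n+1}) = o(n)` and `|x_n|/n → l > 0`, then the
Gromov products `(x_n|x_{n+1})` are `nl + o(n)`, and `(x_n|x_m) → ∞` as `min(n,m) → ∞`,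
i.e. `(x_n)` converges to a point of the Gromov boundary. -/
theorem regular_sequence_converges_to_boundary
    {X : Type*} [MetricSpace X] (o : X) (δ : ℝ) (hδ : 0 ≤ δ)
    (hyp : ∀ x y z : X,
      min ((dist o x + dist o y - dist x y) / 2) ((dist o y + dist o z - dist y z) / 2) - δ ≤
        (dist o x + dist o z - dist x z) / 2)
    (x : ℕ → X) (l : ℝ) (hl : 0 < l)
    (hstep : Tendsto (fun n : ℕ => dist (x n) (x (n + 1)) / n) atTop (nhds 0))
    (hrate : Tendsto (fun n : ℕ => dist o (x n) / n) atTop (nhds l)) :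
    Tendsto (fun n : ℕ =>
        (dist o (x n) + dist o (x (n + 1)) - dist (x n) (x (n + 1))) / 2 / n)
      atTop (nhds l) ∧
    Tendsto (fun p : ℕ × ℕ =>
        (dist o (x p.1) + dist o (x p.2) - dist (x p.1) (x p.2)) / 2)
      (atTop ×ˢ atTop) atTop := by
  constructor
  · -- Part 1
    have hshift : Tendsto (fun n : ℕ => dist o (x (n+1)) / ((n:ℝ)+1)) atTop (nhds l) := by
      have h := hrate.comp (tendsto_add_atTop_nat 1)
      refine h.congr fun n => ?_
      simp [Function.comp]
    have hone : Tendsto (fun n : ℕ => ((n:ℝ)+1)/n) atTop (nhds 1) := by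
      have h : Tendsto (fun n : ℕ => 1 + 1/(n:ℝ)) atTop (nhds (1+0)) :=
        tendsto_const_nhds.add tendsto_one_div_atTop_nhds_zero_nat
      rw [add_zero] at h
      refine h.congr' ?_
      filter_upwards [eventually_ge_atTop 1] with n hn
      have hn0 : (n:ℝ) ≠ 0 := by
        have : 0 < n := hn
        exact_mod_cast this.ne'
      field_simp
    have h1 : Tendsto (fun n : ℕ => dist o (x (n+1)) / (n:ℝ)) atTop (nhds l) := by
      have h := hshift.mul hone
      rw [mul_one] at h
      refine h.congr' ?_
      filter_upwards [eventually_ge_atTop 1] with n hn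
      have hn0 : (n:ℝ) ≠ 0 := by
        have : 0 < n := hn
        exact_mod_cast this.ne'
      field_simp
    have hmain : Tendsto (fun n : ℕ =>
        (dist o (x n)/n + dist o (x (n+1))/n - dist (x n) (x (n+1))/n)/2)
        atTop (nhds ((l + l - 0)/2)) := ((hrate.add h1).sub hstep).div_const 2
    rw [show (l + l - 0)/2 = l by ring] at hmain
    exact hmain.congr fun n => by ring
  · -- Part 2
    set s : ℕ := ⌈(4*δ)/l⌉₊ + 1 with hs
    have hs1 : 1 ≤ s := Nat.le_add_left 1 _
    have hs0 : (0:ℝ) < s := by exact_mod_cast hs1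
    have hsl : 2*δ ≤ (s:ℝ) * (l/2) := by
      have h1 : (4*δ)/l ≤ (s:ℝ) := by
        calc (4*δ)/l ≤ (⌈(4*δ)/l⌉₊ : ℝ) := Nat.le_ceil _
          _ ≤ (s:ℝ) := by exact_mod_cast Nat.le_succ _
      have h2 := mul_le_mul_of_nonneg_right h1 (by positivity : (0:ℝ) ≤ l/2)
      have h3 : (4*δ)/l * (l/2) = 2*δ := by field_simp; ring
      linarith
    set ε₂ : ℝ := l/(8*(s:ℝ)) with he
    have hε₂ : 0 < ε₂ := by rw [he]; positivity
    have hA : ∀ᶠ n : ℕ in atTop, l - l/8 ≤ dist o (x n) / n :=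
      hrate.eventually (eventually_ge_nhds (by linarith))
    have hB : ∀ᶠ n : ℕ in atTop, dist (x n) (x (n+1)) / n ≤ ε₂ :=
      hstep.eventually (eventually_le_nhds hε₂)
    obtain ⟨N, hN⟩ := eventually_atTop.mp ((hA.and hB).and (eventually_ge_atTop (s+1)))
    have hpos : ∀ n, N ≤ n → 0 < (n:ℝ) := by
      intro n hn
      have h := (hN n hn).2
      have : 0 < n := by omega
      exact_mod_cast this
    have hrate' : ∀ n, N ≤ n → (l - l/8) * n ≤ dist o (x n) := by
      intro n hn
      have h := ((hN n hn).1).1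
      have hp := hpos n hn
      calc (l - l/8) * n ≤ (dist o (x n)/n) * n := mul_le_mul_of_nonneg_right h hp.le
        _ = dist o (x n) := div_mul_cancel₀ _ hp.ne'
    have hstep' : ∀ n, N ≤ n → dist (x n) (x (n+1)) ≤ ε₂ * n := by
      intro n hn
      have h := ((hN n hn).1).2
      have hp := hpos n hn
      calc dist (x n) (x (n+1)) = (dist (x n) (x (n+1))/n) * n :=
            (div_mul_cancel₀ _ hp.ne').symm
        _ ≤ ε₂ * n := mul_le_mul_of_nonneg_right h hp.le
    have chain : ∀ k, N ≤ k → ∀ r, r ≤ s → dist (x k) (x (k+r)) ≤ r * (2*ε₂*k) := by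
      intro k hk r
      induction r with
      | zero => intro _; simp
      | succ r ih =>
        intro hr
        have h1 := ih (Nat.le_of_succ_le hr)
        have h2 := hstep' (k+r) (by omega)
        have hks : s + 1 ≤ k := (hN k hk).2
        have hrk : (r:ℝ) ≤ k := by exact_mod_cast (by omega : r ≤ k)
        have ht := dist_triangle (x k) (x (k+r)) (x (k+r+1))
        have hcast : ((k+r:ℕ):ℝ) = (k:ℝ)+r := by push_cast; ring
        rw [hcast] at h2
        have h2' : dist (x (k+r)) (x (k+r+1)) ≤ 2*ε₂*k := by nlinarith
        have hgoal : dist (x k) (x (k+r+1)) ≤ ((r:ℝ)+1) * (2*ε₂*(k:ℝ)) := by nlinarith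
        push_cast
        exact hgoal
    have gpA : ∀ k, N ≤ k → ∀ r, r ≤ s →
        3*l/4 * k ≤ (dist o (x k) + dist o (x (k+r)) - dist (x k) (x (k+r))) / 2 := by
      intro k hk r hr
      have h1 := hrate' k hk
      have h2 := hrate' (k+r) (by omega)
      have h3 := chain k hk r hr
      have hkr : (k:ℝ) ≤ ((k+r:ℕ):ℝ) := by exact_mod_cast Nat.le_add_right k r
      have hk0 : (0:ℝ) ≤ k := Nat.cast_nonneg k
      have h2' : (l - l/8) * k ≤ dist o (x (k+r)) := by nlinarith
      have hrs : (r:ℝ) ≤ s := by exact_mod_cast hr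
      have hsb : (r:ℝ) * (2*ε₂*k) ≤ (s:ℝ) * (2*ε₂*k) :=
        mul_le_mul_of_nonneg_right hrs (mul_nonneg (by linarith : (0:ℝ) ≤ 2*ε₂) hk0)
      have hse : (s:ℝ) * (2*ε₂*k) = l/4 * k := by
        rw [he]; field_simp; ring
      linarith
    have key : ∀ d n, N ≤ n →
        l/2 * n - 2*δ ≤ (dist o (x n) + dist o (x (n+d)) - dist (x n) (x (n+d))) / 2 := by
      intro d
      induction d using Nat.strong_induction_on with
      | _ d ih =>
        intro n hn
        have hk0 : (0:ℝ) ≤ n := Nat.cast_nonneg n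
        by_cases hd : d ≤ s
        · have h := gpA n hn d hd
          nlinarith
        · push_neg at hd
          have h1 := gpA n hn s le_rfl
          have h2 := ih (d - s) (by omega) (n + s) (le_trans hn (Nat.le_add_right n s))
          rw [show n + s + (d - s) = n + d from by omega] at h2
          have h3 := hyp (x n) (x (n+s)) (x (n+d))
          have hcast : ((n+s:ℕ):ℝ) = (n:ℝ) + s := by push_cast; ring
          rw [hcast] at h2
          have hmin : l/2 * n ≤
              min ((dist o (x n) + dist o (x (n+s)) - dist (x n) (x (n+s)))/2)
                ((dist o (x (n+s)) + dist o (x (n+d)) - dist (x (n+s)) (x (n+d)))/2) :=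
            le_min (by nlinarith) (by linarith)
          linarith
    rw [tendsto_atTop]
    intro C
    set M : ℕ := max N ⌈(C + 2*δ) * (2/l)⌉₊ with hM
    have hM1 : N ≤ M := le_max_left _ _
    have hM2 : (C + 2*δ) * (2/l) ≤ (M:ℝ) := by
      calc (C + 2*δ) * (2/l) ≤ (⌈(C + 2*δ) * (2/l)⌉₊ : ℝ) := Nat.le_ceil _
        _ ≤ (M:ℝ) := by exact_mod_cast le_max_right _ _
    have hCM : C ≤ l/2 * M - 2*δ := by
      have h1 := mul_le_mul_of_nonneg_right hM2 (by positivity : (0:ℝ) ≤ l/2)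
      have h2 : (C + 2*δ) * (2/l) * (l/2) = C + 2*δ := by field_simp
      linarith
    filter_upwards [(eventually_ge_atTop M).prod_mk (eventually_ge_atTop M)] with p hp
    obtain ⟨h1, h2⟩ := hp
    rcases le_total p.1 p.2 with h | h
    · have hk := key (p.2 - p.1) p.1 (le_trans hM1 h1)
      rw [show p.1 + (p.2 - p.1) = p.2 from by omega] at hk
      have hMp : (M:ℝ) ≤ p.1 := by exact_mod_cast h1
      have hmul := mul_le_mul_of_nonneg_left hMp (by positivity : (0:ℝ) ≤ l/2)
      linarith
    · have hk := key (p.1 - p.2) p.2 (le_trans hM1 h2)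
      rw [show p.2 + (p.1 - p.2) = p.1 from by omega] at hk
      have hd : dist (x p.1) (x p.2) = dist (x p.2) (x p.1) := dist_comm _ _
      have hMp : (M:ℝ) ≤ p.2 := by exact_mod_cast h2
      have hmul := mul_le_mul_of_nonneg_left hMp (by positivity : (0:ℝ) ≤ l/2)
      linarith
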